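/- arXiv:2111.11678 — 2 statements merged into one kernel-verified Lean document; each statement's English description precedes it below -/
import Mathlib

section
/- Let m, n ≥ 1 be integers, let t be a real number, and let μ : Fin m → ℝ and ν : Fin n → ℝ be families of real numbers such that t + min_{l} ν_l > max_{j} μ_j. Let A be an m × n complex matrix and define the m × n complex matrix B by B_{jl} = A_{jl}/(t − μ_j + ν_l) (all denominators are positive by the hypothesis). Then ‖B‖ ≤ ‖A‖ / (t + min_l ν_l − max_j μ_j), where ‖·‖ denotes the operator norm of a matrix as a linear map between Euclidean spaces ℂ^n → ℂ^m. -/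
open MeasureTheory Set Real Matrix
open scoped Matrix.Norms.L2Operator

lemma integral_exp_neg_mul_Ioi_zero {c : ℝ} (hc : 0 < c) :
    ∫ s in Ioi (0:ℝ), Real.exp (-c * s) = c⁻¹ := by
  have hd : ∀ x ∈ Ici (0:ℝ),
      HasDerivAt (fun s => -c⁻¹ * Real.exp (-c * s)) (Real.exp (-c * x)) x := by
    intro x _
    have h1 : HasDerivAt (fun s : ℝ => -c * s) (-c * 1) x := (hasDerivAt_id x).const_mul (-c)
    have h2 := (h1.exp).const_mul (-c⁻¹)
    convert h2 using 1
    rfl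
    rfl
    field_simp
  have hint : IntegrableOn (fun s => Real.exp (-c * s)) (Ioi (0:ℝ)) :=
    exp_neg_integrableOn_Ioi 0 hc
  have htend : Filter.Tendsto (fun s => -c⁻¹ * Real.exp (-c * s)) Filter.atTop (nhds 0) := by
    have h1 : Filter.Tendsto (fun s : ℝ => -c * s) Filter.atTop Filter.atBot :=
      Filter.tendsto_id.const_mul_atTop_of_neg (by linarith)
    have h2 := Real.tendsto_exp_atBot.comp h1
    have h3 := h2.const_mul (-c⁻¹)
    simpa using h3
  have := integral_Ioi_of_hasDerivAt_of_tendsto' hd hint htend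
  rw [this]
  simp

lemma l2_opNorm_diagonal_le {k : ℕ} (d : Fin k → ℂ) {C : ℝ} (hC : 0 ≤ C)
    (h : ∀ i, ‖d i‖ ≤ C) : ‖Matrix.diagonal d‖ ≤ C := by
  rw [Matrix.l2_opNorm_def]
  refine ContinuousLinearMap.opNorm_le_bound _ hC fun x => ?_
  have h1 : Matrix.toEuclideanLin (Matrix.diagonal d) x
      = (WithLp.equiv 2 (Fin k → ℂ)).symm (fun i => d i * x i) := by
    rw [Matrix.toEuclideanLin_apply]
    congr 1
    ext i
    simp [Matrix.mulVec_diagonal]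
  show ‖Matrix.toEuclideanLin (Matrix.diagonal d) x‖ ≤ C * ‖x‖
  rw [h1, EuclideanSpace.norm_eq, EuclideanSpace.norm_eq]
  simp only [WithLp.equiv_symm_apply, PiLp.toLp_apply]
  have hle : ∀ i ∈ Finset.univ, ‖d i * x i‖ ^ 2 ≤ C ^ 2 * ‖x i‖ ^ 2 := by
    intro i _
    rw [norm_mul, mul_pow]
    exact mul_le_mul_of_nonneg_right (pow_le_pow_left₀ (norm_nonneg _) (h i) 2) (sq_nonneg _)
  calc Real.sqrt (∑ i, ‖d i * x i‖ ^ 2) ≤ Real.sqrt (∑ i, C ^ 2 * ‖x i‖ ^ 2) :=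
        Real.sqrt_le_sqrt (Finset.sum_le_sum hle)
    _ = C * Real.sqrt (∑ i, ‖x i‖ ^ 2) := by
        rw [← Finset.mul_sum, Real.sqrt_mul (sq_nonneg C), Real.sqrt_sq hC]

/-- The operator norm of a complex `m × n` matrix viewed as a linear map
between the Euclidean spaces `ℂ^n → ℂ^m`. -/
noncomputable def matrixOpNorm {m n : ℕ} (A : Matrix (Fin m) (Fin n) ℂ) : ℝ :=
  ‖LinearMap.toContinuousLinearMap (Matrix.toEuclideanLin A)‖

theorem stmt2 (m n : ℕ) (hm : 0 < m) (hn : 0 < n) (t : ℝ)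
    (μ : Fin m → ℝ) (ν : Fin n → ℝ)
    (hμν : Finset.univ.sup' (Finset.univ_nonempty_iff.mpr ⟨⟨0, hm⟩⟩) μ <
      t + Finset.univ.inf' (Finset.univ_nonempty_iff.mpr ⟨⟨0, hn⟩⟩) ν)
    (A B : Matrix (Fin m) (Fin n) ℂ)
    (hB : ∀ j l, B j l = A j l / ((t - μ j + ν l : ℝ) : ℂ)) :
    matrixOpNorm B ≤ matrixOpNorm A /
      (t + Finset.univ.inf' (Finset.univ_nonempty_iff.mpr ⟨⟨0, hn⟩⟩) ν
        - Finset.univ.sup' (Finset.univ_nonempty_iff.mpr ⟨⟨0, hm⟩⟩) μ) := by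
  classical
  set S := Finset.univ.sup' (Finset.univ_nonempty_iff.mpr ⟨⟨0, hm⟩⟩) μ with hSdef
  set I := Finset.univ.inf' (Finset.univ_nonempty_iff.mpr ⟨⟨0, hn⟩⟩) ν with hIdef
  set δ := t + I - S with hδdef
  have hδpos : 0 < δ := by rw [hδdef]; linarith
  have hμle : ∀ j, μ j ≤ S := fun j => Finset.le_sup' μ (Finset.mem_univ j)
  have hνge : ∀ l, I ≤ ν l := fun l => Finset.inf'_le ν (Finset.mem_univ l)
  have hc : ∀ j l, 0 < t - μ j + ν l := by
    intro j l
    have := hμle j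
    have := hνge l
    rw [hδdef] at hδpos
    linarith
  set N : ℝ → Matrix (Fin m) (Fin n) ℂ := fun s =>
    Matrix.of fun j l => A j l * ((Real.exp (-(t - μ j + ν l) * s) : ℝ) : ℂ) with hNdef
  have hsum : ∀ s : ℝ, N s = ∑ j, ∑ l,
      (A j l * ((Real.exp (-(t - μ j + ν l) * s) : ℝ) : ℂ)) • Matrix.single j l 1 := by
    intro s
    conv_lhs => rw [Matrix.matrix_eq_sum_single (N s)]
    refine Finset.sum_congr rfl fun j _ => Finset.sum_congr rfl fun l _ => ?_
    rw [Matrix.smul_single, smul_eq_mul, mul_one]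
    rfl
  have hint : ∀ j l, IntegrableOn
      (fun s => A j l * ((Real.exp (-(t - μ j + ν l) * s) : ℝ) : ℂ)) (Ioi (0:ℝ)) := by
    intro j l
    exact ((exp_neg_integrableOn_Ioi 0 (hc j l)).ofReal).const_mul _
  have hIntN : (∫ s in Ioi (0:ℝ), N s) = B := by
    have key : (∫ s in Ioi (0:ℝ), N s) = ∑ j, ∑ l,
        (A j l * (((t - μ j + ν l)⁻¹ : ℝ) : ℂ)) • Matrix.single j l 1 := by
      simp_rw [hsum]
      rw [integral_finset_sum _ (fun j _ => integrable_finset_sum _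
        (fun l _ => (hint j l).smul_const _))]
      refine Finset.sum_congr rfl fun j _ => ?_
      rw [integral_finset_sum _ (fun l _ => (hint j l).smul_const _)]
      refine Finset.sum_congr rfl fun l _ => ?_
      rw [integral_smul_const, integral_const_mul]
      congr 2
      rw [← integral_exp_neg_mul_Ioi_zero (hc j l)]
      exact integral_ofReal
    rw [key]
    conv_rhs => rw [Matrix.matrix_eq_sum_single B]
    refine Finset.sum_congr rfl fun j _ => Finset.sum_congr rfl fun l _ => ?_
    rw [Matrix.smul_single, smul_eq_mul, mul_one, hB j l, div_eq_mul_inv,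
      Complex.ofReal_inv]
  have hprod : ∀ s : ℝ, N s =
      Matrix.diagonal (fun j => ((Real.exp (s * μ j - s * t) : ℝ) : ℂ)) * A *
      Matrix.diagonal (fun l => ((Real.exp (-(s * ν l)) : ℝ) : ℂ)) := by
    intro s
    ext j l
    rw [Matrix.mul_diagonal, Matrix.diagonal_mul]
    show A j l * ((Real.exp (-(t - μ j + ν l) * s) : ℝ) : ℂ) = _
    have he : Real.exp (-(t - μ j + ν l) * s)
        = Real.exp (s * μ j - s * t) * Real.exp (-(s * ν l)) := by
      rw [← Real.exp_add]; ring_nf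
    rw [he, Complex.ofReal_mul]; ring
  have hbound : ∀ s ∈ Ioi (0:ℝ), ‖N s‖ ≤ Real.exp (-δ * s) * ‖A‖ := by
    intro s hs
    have hs0 : (0:ℝ) ≤ s := le_of_lt hs
    rw [hprod s]
    have h1 : ‖Matrix.diagonal (fun j => ((Real.exp (s * μ j - s * t) : ℝ) : ℂ))‖ ≤
        Real.exp (s * S - s * t) := by
      refine l2_opNorm_diagonal_le _ (Real.exp_nonneg _) fun j => ?_
      rw [Complex.norm_real, Real.norm_eq_abs, Real.abs_exp]
      refine Real.exp_le_exp.mpr ?_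
      have := hμle j
      nlinarith
    have h2 : ‖Matrix.diagonal (fun l => ((Real.exp (-(s * ν l)) : ℝ) : ℂ))‖ ≤
        Real.exp (-(s * I)) := by
      refine l2_opNorm_diagonal_le _ (Real.exp_nonneg _) fun l => ?_
      rw [Complex.norm_real, Real.norm_eq_abs, Real.abs_exp]
      refine Real.exp_le_exp.mpr ?_
      have := hνge l
      nlinarith
    calc ‖Matrix.diagonal (fun j => ((Real.exp (s * μ j - s * t) : ℝ) : ℂ)) * A *
          Matrix.diagonal (fun l => ((Real.exp (-(s * ν l)) : ℝ) : ℂ))‖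
        ≤ ‖Matrix.diagonal (fun j => ((Real.exp (s * μ j - s * t) : ℝ) : ℂ)) * A‖ *
          ‖Matrix.diagonal (fun l => ((Real.exp (-(s * ν l)) : ℝ) : ℂ))‖ :=
          Matrix.l2_opNorm_mul _ _
      _ ≤ (‖Matrix.diagonal (fun j => ((Real.exp (s * μ j - s * t) : ℝ) : ℂ))‖ * ‖A‖) *
          ‖Matrix.diagonal (fun l => ((Real.exp (-(s * ν l)) : ℝ) : ℂ))‖ := by
          exact mul_le_mul_of_nonneg_right (Matrix.l2_opNorm_mul _ _) (norm_nonneg _)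
      _ ≤ (Real.exp (s * S - s * t) * ‖A‖) * Real.exp (-(s * I)) := by
          have hA : (0:ℝ) ≤ ‖A‖ := norm_nonneg _
          gcongr
      _ = Real.exp (-δ * s) * ‖A‖ := by
          rw [mul_right_comm, ← Real.exp_add]
          congr 2
          rw [hδdef]; ring
  have hnormB : matrixOpNorm B = ‖B‖ := rfl
  have hnormA : matrixOpNorm A = ‖A‖ := rfl
  rw [hnormB, hnormA, ← hIntN]
  calc ‖∫ s in Ioi (0:ℝ), N s‖ ≤ ∫ s in Ioi (0:ℝ), Real.exp (-δ * s) * ‖A‖ := by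
        refine norm_integral_le_of_norm_le ((exp_neg_integrableOn_Ioi 0 hδpos).mul_const ‖A‖) ?_
        filter_upwards [ae_restrict_mem measurableSet_Ioi] with s hs using hbound s hs
    _ = (∫ s in Ioi (0:ℝ), Real.exp (-δ * s)) * ‖A‖ := by rw [integral_mul_const]
    _ = δ⁻¹ * ‖A‖ := by rw [integral_exp_neg_mul_Ioi_zero hδpos]
    _ = ‖A‖ / δ := by rw [mul_comm, div_eq_mul_inv]
end

section
/- Let m, n ≥ 1 be integers, let A be an m × n complex matrix, and let ξ ∈ ℂ^n. Then Σ_{j=0}^{m−1} ( Σ_{l=0}^{n−1} |A_{jl}| · |ξ_l| )² ≤ min(m, n) · ‖A‖² · ‖ξ‖², where ‖A‖ is the operator norm of A as a linear map ℂ^n → ℂ^m with Euclidean norms and ‖ξ‖ is the Euclidean norm of ξ. In particular, if B is an m × n complex matrix with |B_{jl}| ≤ c·|A_{jl}| for all j, l and some c ≥ 0, then ‖B‖ ≤ c · (min(m,n))^{1/2} · ‖A‖. -/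
lemma euclid_coord {m n : ℕ} (A : Matrix (Fin m) (Fin n) ℂ)
    (x : EuclideanSpace ℂ (Fin n)) (j : Fin m) :
    (Matrix.toEuclideanLin A x) j = ∑ l, A j l * x l := rfl

lemma euclid_norm_sq {n : ℕ} (x : EuclideanSpace ℂ (Fin n)) :
    ‖x‖ ^ 2 = ∑ l, ‖x l‖ ^ 2 := by
  rw [EuclideanSpace.norm_eq, Real.sq_sqrt (by positivity)]

lemma euclid_coord_le {n : ℕ} (x : EuclideanSpace ℂ (Fin n)) (j : Fin n) :
    ‖x j‖ ≤ ‖x‖ := by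
  have h1 : ‖x j‖ ^ 2 ≤ ‖x‖ ^ 2 := by
    rw [euclid_norm_sq]
    exact Finset.single_le_sum (f := fun l => ‖x l‖ ^ 2) (fun i _ => by positivity)
      (Finset.mem_univ j)
  nlinarith [norm_nonneg (x j), norm_nonneg x]

lemma opnorm_nonneg {m n : ℕ} (A : Matrix (Fin m) (Fin n) ℂ) : 0 ≤ matrixOpNorm A :=
  norm_nonneg _

set_option maxHeartbeats 1000000 in
/-- per-row bound: each row contribution is at most `‖A‖² ‖ξ‖²`. -/
lemma row_bound {m n : ℕ} (A : Matrix (Fin m) (Fin n) ℂ)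
    (ξ : EuclideanSpace ℂ (Fin n)) (j : Fin m) :
    (∑ l : Fin n, ‖A j l‖ * ‖ξ l‖) ^ 2 ≤
      matrixOpNorm A ^ 2 * ‖ξ‖ ^ 2 := by
  set f := LinearMap.toContinuousLinearMap (Matrix.toEuclideanLin A) with hf
  -- phase vector
  set η : EuclideanSpace ℂ (Fin n) :=
    (WithLp.toLp 2 (fun l => (starRingEnd ℂ) (A j l) / (‖A j l‖ : ℂ) * (‖ξ l‖ : ℂ))
      : EuclideanSpace ℂ (Fin n)) with hη
  have hcoord : ∀ l, η l = (starRingEnd ℂ) (A j l) / (‖A j l‖ : ℂ)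
      * (‖ξ l‖ : ℂ) := fun l => rfl
  have key : (f η) j = ((∑ l : Fin n, ‖A j l‖ * ‖ξ l‖ : ℝ) : ℂ) := by
    have : (f η) j = ∑ l, A j l * η l := euclid_coord A η j
    rw [this, Complex.ofReal_sum]
    refine Finset.sum_congr rfl fun l _ => ?_
    rw [hcoord l]
    by_cases h : A j l = 0
    · simp [h]
    · have habs : (‖A j l‖ : ℂ) ≠ 0 := by
        simpa using (norm_ne_zero_iff.mpr h)
      field_simp
      rw [Complex.mul_conj, Complex.normSq_eq_norm_sq]
      push_cast
      ring_nf
  have hηξ : ‖η‖ ≤ ‖ξ‖ := by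
    have h2 : ‖η‖ ^ 2 ≤ ‖ξ‖ ^ 2 := by
      rw [euclid_norm_sq, euclid_norm_sq]
      refine Finset.sum_le_sum fun l _ => ?_
      rw [hcoord l]
      have h1 : ‖(starRingEnd ℂ) (A j l) / (‖A j l‖ : ℂ)‖ ≤ 1 := by
        by_cases h : A j l = 0
        · simp [h]
        · rw [norm_div]
          rw [div_le_one (by simpa using norm_pos_iff.mpr h)]
          simp
      have : ‖(starRingEnd ℂ) (A j l) / (‖A j l‖ : ℂ)
          * (‖ξ l‖ : ℂ)‖ ≤ ‖ξ l‖ := by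
        rw [norm_mul]
        calc _ ≤ 1 * ‖(‖ξ l‖ : ℂ)‖ :=
              mul_le_mul_of_nonneg_right h1 (norm_nonneg _)
          _ = ‖ξ l‖ := by simp
      nlinarith [norm_nonneg ((starRingEnd ℂ) (A j l) / (‖A j l‖ : ℂ)
        * (‖ξ l‖ : ℂ)), norm_nonneg (ξ l)]
    nlinarith [norm_nonneg η, norm_nonneg ξ]
  have hsum_nonneg : 0 ≤ ∑ l : Fin n, ‖A j l‖ * ‖ξ l‖ := by
    positivity
  have hchain : ∑ l : Fin n, ‖A j l‖ * ‖ξ l‖ ≤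
      matrixOpNorm A * ‖ξ‖ := by
    have h1 : ∑ l : Fin n, ‖A j l‖ * ‖ξ l‖ = ‖(f η) j‖ := by
      rw [key, Complex.norm_real, Real.norm_eq_abs, abs_of_nonneg hsum_nonneg]
    rw [h1]
    calc ‖(f η) j‖ ≤ ‖f η‖ := euclid_coord_le _ j
      _ ≤ ‖f‖ * ‖η‖ := f.le_opNorm η
      _ ≤ matrixOpNorm A * ‖ξ‖ :=
          mul_le_mul_of_nonneg_left hηξ (norm_nonneg f)
  nlinarith [opnorm_nonneg A, norm_nonneg ξ]

/-- column bound: `∑_j |A j l|² ≤ ‖A‖²`. -/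
lemma col_bound {m n : ℕ} (A : Matrix (Fin m) (Fin n) ℂ) (l : Fin n) :
    ∑ j : Fin m, ‖A j l‖ ^ 2 ≤ matrixOpNorm A ^ 2 := by
  set f := LinearMap.toContinuousLinearMap (Matrix.toEuclideanLin A) with hf
  set e : EuclideanSpace ℂ (Fin n) := EuclideanSpace.single l (1 : ℂ) with he
  have h1 : ∀ j : Fin m, (f e) j = A j l := by
    intro j
    have : (f e) j = ∑ k, A j k * e k := euclid_coord A e j
    rw [this]
    rw [Finset.sum_eq_single l]
    · simp [he, EuclideanSpace.single_apply]
    · intro k _ hk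
      simp [he, EuclideanSpace.single_apply, hk]
    · simp
  have h2 : ∑ j : Fin m, ‖A j l‖ ^ 2 = ‖f e‖ ^ 2 := by
    rw [euclid_norm_sq]
    refine Finset.sum_congr rfl fun j _ => ?_
    rw [h1 j]
  rw [h2]
  have h3 : ‖f e‖ ≤ matrixOpNorm A := by
    calc ‖f e‖ ≤ ‖f‖ * ‖e‖ := f.le_opNorm e
      _ = matrixOpNorm A := by rw [he, EuclideanSpace.norm_single]; simp [matrixOpNorm, hf]
  nlinarith [norm_nonneg (f e), opnorm_nonneg A]

theorem stmt3 (m n : ℕ) (hm : 0 < m) (hn : 0 < n) (A : Matrix (Fin m) (Fin n) ℂ) :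
    (∀ ξ : EuclideanSpace ℂ (Fin n),
      ∑ j : Fin m, (∑ l : Fin n, ‖A j l‖ * ‖ξ l‖) ^ 2 ≤
        (min m n : ℝ) * matrixOpNorm A ^ 2 * ‖ξ‖ ^ 2) ∧
    (∀ (B : Matrix (Fin m) (Fin n) ℂ) (c : ℝ), 0 ≤ c →
      (∀ j l, ‖B j l‖ ≤ c * ‖A j l‖) →
      matrixOpNorm B ≤ c * Real.sqrt (min m n : ℝ) * matrixOpNorm A) := by
  have part1 : ∀ ξ : EuclideanSpace ℂ (Fin n),
      ∑ j : Fin m, (∑ l : Fin n, ‖A j l‖ * ‖ξ l‖) ^ 2 ≤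
        (min m n : ℝ) * matrixOpNorm A ^ 2 * ‖ξ‖ ^ 2 := by
    intro ξ
    set X : ℝ := matrixOpNorm A ^ 2 * ‖ξ‖ ^ 2 with hX
    have hXnn : 0 ≤ X := by positivity
    have hmb : ∑ j : Fin m, (∑ l : Fin n, ‖A j l‖ * ‖ξ l‖) ^ 2 ≤
        (m : ℝ) * X := by
      calc _ ≤ ∑ _j : Fin m, X := Finset.sum_le_sum fun j _ => row_bound A ξ j
        _ = (m : ℝ) * X := by simp [mul_comm]
    have hnb : ∑ j : Fin m, (∑ l : Fin n, ‖A j l‖ * ‖ξ l‖) ^ 2 ≤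
        (n : ℝ) * X := by
      have step1 : ∀ j : Fin m,
          (∑ l : Fin n, ‖A j l‖ * ‖ξ l‖) ^ 2 ≤
            (n : ℝ) * ∑ l : Fin n, (‖A j l‖ * ‖ξ l‖) ^ 2 := by
        intro j
        have := sq_sum_le_card_mul_sum_sq
          (s := (Finset.univ : Finset (Fin n)))
          (f := fun l => ‖A j l‖ * ‖ξ l‖)
        simpa using this
      calc ∑ j : Fin m, (∑ l : Fin n, ‖A j l‖ * ‖ξ l‖) ^ 2
          ≤ ∑ j : Fin m, (n : ℝ) * ∑ l : Fin n, (‖A j l‖ * ‖ξ l‖) ^ 2 :=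
            Finset.sum_le_sum fun j _ => step1 j
        _ = (n : ℝ) * ∑ l : Fin n, (∑ j : Fin m, ‖A j l‖ ^ 2) * ‖ξ l‖ ^ 2 := by
            rw [← Finset.mul_sum, Finset.sum_comm]
            congr 1
            refine Finset.sum_congr rfl fun l _ => ?_
            rw [Finset.sum_mul]
            exact Finset.sum_congr rfl fun j _ => by ring
        _ ≤ (n : ℝ) * ∑ l : Fin n, matrixOpNorm A ^ 2 * ‖ξ l‖ ^ 2 := by
            refine mul_le_mul_of_nonneg_left (Finset.sum_le_sum fun l _ => ?_) (by positivity)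
            exact mul_le_mul_of_nonneg_right (col_bound A l) (by positivity)
        _ = (n : ℝ) * X := by
            have hXeq : X = ∑ l : Fin n, matrixOpNorm A ^ 2 * ‖ξ l‖ ^ 2 := by
              rw [hX, euclid_norm_sq, Finset.mul_sum]
            rw [hXeq]
    have hcast : (min m n : ℝ) = min (m : ℝ) (n : ℝ) := by push_cast; rfl
    rw [mul_assoc, ← hX, hcast]
    rcases le_total (m:ℝ) (n:ℝ) with h | h
    · rw [min_eq_left h]; exact hmb
    · rw [min_eq_right h]; exact hnb
  refine ⟨part1, ?_⟩
  intro B c hc hBA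
  set g := LinearMap.toContinuousLinearMap (Matrix.toEuclideanLin B) with hg
  have hbound_nn : 0 ≤ c * Real.sqrt (min m n : ℝ) * matrixOpNorm A := by
    have := opnorm_nonneg A
    positivity
  refine ContinuousLinearMap.opNorm_le_bound g hbound_nn fun ξ => ?_
  have hsq : ‖g ξ‖ ^ 2 ≤ (c * Real.sqrt (min m n : ℝ) * matrixOpNorm A * ‖ξ‖) ^ 2 := by
    have h1 : ‖g ξ‖ ^ 2 = ∑ j : Fin m, ‖∑ l, B j l * ξ l‖ ^ 2 := by
      rw [euclid_norm_sq]
      refine Finset.sum_congr rfl fun j _ => ?_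
      rw [show (g ξ) j = ∑ l, B j l * ξ l from euclid_coord B ξ j]
    have h2 : ∀ j : Fin m, ‖∑ l, B j l * ξ l‖ ≤
        c * ∑ l : Fin n, ‖A j l‖ * ‖ξ l‖ := by
      intro j
      calc ‖∑ l, B j l * ξ l‖ ≤ ∑ l, ‖B j l * ξ l‖ :=
            norm_sum_le _ _
        _ = ∑ l, ‖B j l‖ * ‖ξ l‖ := by
            refine Finset.sum_congr rfl fun l _ => norm_mul _ _
        _ ≤ ∑ l, c * (‖A j l‖ * ‖ξ l‖) := by
            refine Finset.sum_le_sum fun l _ => ?_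
            rw [← mul_assoc]
            exact mul_le_mul_of_nonneg_right (hBA j l) (norm_nonneg _)
        _ = c * ∑ l : Fin n, ‖A j l‖ * ‖ξ l‖ := by
            rw [Finset.mul_sum]
    have h3 : ‖g ξ‖ ^ 2 ≤ c ^ 2 * ∑ j : Fin m,
        (∑ l : Fin n, ‖A j l‖ * ‖ξ l‖) ^ 2 := by
      rw [h1, Finset.mul_sum]
      refine Finset.sum_le_sum fun j _ => ?_
      have habs_nn : 0 ≤ ‖∑ l, B j l * ξ l‖ := norm_nonneg _
      nlinarith [h2 j, Finset.sum_nonneg (fun l (_ : l ∈ Finset.univ) =>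
        mul_nonneg (norm_nonneg (A j l)) (norm_nonneg (ξ l)))]
    have h4 := part1 ξ
    have hsqrt : Real.sqrt (min m n : ℝ) ^ 2 = (min m n : ℝ) := by
      rw [Real.sq_sqrt]; positivity
    calc ‖g ξ‖ ^ 2 ≤ c ^ 2 * ((min m n : ℝ) * matrixOpNorm A ^ 2 * ‖ξ‖ ^ 2) := by
          refine le_trans h3 (mul_le_mul_of_nonneg_left h4 (by positivity))
      _ = (c * Real.sqrt (min m n : ℝ) * matrixOpNorm A * ‖ξ‖) ^ 2 := by
          rw [mul_pow, mul_pow, mul_pow, hsqrt]; ring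
  nlinarith [norm_nonneg (g ξ), hbound_nn, norm_nonneg ξ,
    mul_nonneg hbound_nn (norm_nonneg ξ)]
end
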